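/- A subset B of a weak*-compact convex set K ⊆ X* (I)-generates K if and only if: whenever B is written as an increasing union B = ⋃_n B_n with B_1 ⊆ B_2 ⊆ …, the set ⋃_n (weak*-closed convex hull of B_n) is norm-dense in K. -/

import Mathlib

open Filter NormedSpace

/-- The weak*-closed convex hull of a set of functionals. -/
noncomputable def wstarClConvHull {X : Type*} [NormedAddCommGroup X] [NormedSpace ℝ X]
    (S : Set (StrongDual ℝ X)) : Set (StrongDual ℝ X) :=
  ⇑StrongDual.toWeakDual ⁻¹' closure (convexHull ℝ (⇑StrongDual.toWeakDual '' S))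

/-- `B` (I)-generates `K` if, whenever `B` is written as a countable union
`B = ⋃ₙ Bₙ`, `K` is the norm-closed convex hull of the union of the
weak*-closed convex hulls of the `Bₙ`. -/
def IGenerates {X : Type*} [NormedAddCommGroup X] [NormedSpace ℝ X]
    (B K : Set (StrongDual ℝ X)) : Prop :=
  ∀ Bn : ℕ → Set (StrongDual ℝ X), B = ⋃ n, Bn n →
    K = closure (convexHull ℝ (⋃ n, wstarClConvHull (Bn n)))

/-! ### Auxiliary lemmas -/

section Aux

variable {E : Type*} [AddCommGroup E] [Module ℝ E] [TopologicalSpace E]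
  [ContinuousAdd E] [ContinuousSMul ℝ E]

/-- The convex join of two compact sets in a topological vector space is compact. -/
lemma isCompact_convexJoin_aux {s t : Set E} (hs : IsCompact s) (ht : IsCompact t) :
    IsCompact (convexJoin ℝ s t) := by
  have himg : convexJoin ℝ s t =
      (fun p : ℝ × E × E => (1 - p.1) • p.2.1 + p.1 • p.2.2) ''
        (Set.Icc (0 : ℝ) 1 ×ˢ s ×ˢ t) := by
    ext z
    simp only [convexJoin, Set.mem_iUnion, Set.mem_image, Set.mem_prod, Prod.exists]
    constructor
    · rintro ⟨x, hx, y, hy, hz⟩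
      rw [segment_eq_image] at hz
      obtain ⟨θ, hθ, rfl⟩ := hz
      exact ⟨θ, x, y, ⟨hθ, hx, hy⟩, rfl⟩
    · rintro ⟨θ, x, y, ⟨hθ, hx, hy⟩, rfl⟩
      refine ⟨x, hx, y, hy, ?_⟩
      rw [segment_eq_image]
      exact ⟨θ, hθ, rfl⟩
  rw [himg]
  exact (isCompact_Icc.prod (hs.prod ht)).image (by fun_prop)

/-- The convex hull of the accumulation of a family of compact convex sets is compact. -/
lemma isCompact_convexHull_accumulate_aux (A : ℕ → Set E)
    (hc : ∀ n, IsCompact (A n)) (hconv : ∀ n, Convex ℝ (A n)) (n : ℕ) :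
    IsCompact (convexHull ℝ (Set.accumulate A n)) := by
  have hacc_succ : ∀ m : ℕ, Set.accumulate A (m + 1) = Set.accumulate A m ∪ A (m + 1) := by
    intro m
    ext x
    simp only [Set.mem_accumulate, Set.mem_union]
    constructor
    · rintro ⟨y, hy, hx⟩
      rcases Nat.le_succ_iff.mp hy with hy' | hy'
      · exact Or.inl ⟨y, hy', hx⟩
      · subst hy'; exact Or.inr hx
    · rintro (⟨y, hy, hx⟩ | hx)
      · exact ⟨y, hy.trans (Nat.le_succ m), hx⟩
      · exact ⟨m + 1, le_rfl, hx⟩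
  induction n with
  | zero =>
    have : Set.accumulate A 0 = A 0 := by
      ext x; simp [Set.mem_accumulate, Nat.le_zero]
    rw [this, (hconv 0).convexHull_eq]
    exact hc 0
  | succ n ih =>
    rw [hacc_succ n, ← convexHull_convexHull_union_left]
    rcases (convexHull ℝ (Set.accumulate A n)).eq_empty_or_nonempty with h | h
    · rw [h, Set.empty_union, (hconv _).convexHull_eq]
      exact hc _
    rcases (A (n + 1)).eq_empty_or_nonempty with h' | h'
    · rw [h', Set.union_empty, (convex_convexHull ℝ _).convexHull_eq]
      exact ih
    · rw [Convex.convexHull_union (convex_convexHull ℝ _) (hconv _) h h']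
      exact isCompact_convexJoin_aux ih (hc _)

end Aux

section DualAux

variable {X : Type*} [NormedAddCommGroup X] [NormedSpace ℝ X]

/-- Preimage under `toWeakDual` of a convex hull is the convex hull of the preimage. -/
lemma preimage_toWeakDual_convexHull (S : Set (WeakDual ℝ X)) :
    ⇑StrongDual.toWeakDual ⁻¹' (convexHull ℝ S) =
      convexHull ℝ (⇑StrongDual.toWeakDual ⁻¹' S) := by
  have h1 : ⇑(StrongDual.toWeakDual : StrongDual ℝ X ≃ₗ[ℝ] WeakDual ℝ X) ⁻¹' (convexHull ℝ S)
      = ⇑(StrongDual.toWeakDual : StrongDual ℝ X ≃ₗ[ℝ] WeakDual ℝ X).symm '' (convexHull ℝ S) :=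
    (Equiv.image_symm_eq_preimage
      (StrongDual.toWeakDual : StrongDual ℝ X ≃ₗ[ℝ] WeakDual ℝ X).toEquiv _).symm
  have h2 : ⇑(StrongDual.toWeakDual : StrongDual ℝ X ≃ₗ[ℝ] WeakDual ℝ X) ⁻¹' S
      = ⇑(StrongDual.toWeakDual : StrongDual ℝ X ≃ₗ[ℝ] WeakDual ℝ X).symm '' S :=
    (Equiv.image_symm_eq_preimage
      (StrongDual.toWeakDual : StrongDual ℝ X ≃ₗ[ℝ] WeakDual ℝ X).toEquiv _).symm
  rw [h1, h2]
  simpa using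
    ((StrongDual.toWeakDual : StrongDual ℝ X ≃ₗ[ℝ] WeakDual ℝ X).symm.toLinearMap.image_convexHull S)

lemma wstarClConvHull_convex (S : Set (StrongDual ℝ X)) : Convex ℝ (wstarClConvHull S) :=
  ((convex_convexHull ℝ _).closure).linear_preimage
    (StrongDual.toWeakDual : StrongDual ℝ X ≃ₗ[ℝ] WeakDual ℝ X).toLinearMap

lemma wstarClConvHull_mono {S T : Set (StrongDual ℝ X)} (h : S ⊆ T) :
    wstarClConvHull S ⊆ wstarClConvHull T :=
  Set.preimage_mono (closure_mono (convexHull_mono (Set.image_mono h)))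

end DualAux

/-- `B` (I)-generates `K` iff for every increasing decomposition `B = ⋃ₙ Bₙ`,
the union of the weak*-closed convex hulls of the `Bₙ` is norm-dense in `K`. -/
theorem iGenerates_iff_increasing {X : Type*} [NormedAddCommGroup X]
    [NormedSpace ℝ X] [CompleteSpace X]
    (K : Set (StrongDual ℝ X)) (hKcomp : IsCompact (⇑StrongDual.toWeakDual '' K))
    (hKconv : Convex ℝ K)
    (B : Set (StrongDual ℝ X)) (hBK : B ⊆ K) :
    IGenerates B K ↔
      ∀ Bn : ℕ → Set (StrongDual ℝ X), Monotone Bn → B = ⋃ n, Bn n →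
        K ⊆ closure (⋃ n, wstarClConvHull (Bn n)) := by
  -- the image of K in the weak dual is convex and closed
  have hKimg_conv : Convex ℝ (⇑StrongDual.toWeakDual '' K) :=
    hKconv.linear_image (StrongDual.toWeakDual : StrongDual ℝ X ≃ₗ[ℝ] WeakDual ℝ X).toLinearMap
  have hKimg_closed : IsClosed (⇑StrongDual.toWeakDual '' K) := hKcomp.isClosed
  -- K is norm-closed
  have hKclosed : IsClosed K := by
    have : K = ⇑StrongDual.toWeakDual ⁻¹' (⇑StrongDual.toWeakDual '' K) :=
      (Set.preimage_image_eq K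
        (StrongDual.toWeakDual : StrongDual ℝ X ≃ₗ[ℝ] WeakDual ℝ X).injective).symm
    rw [this]
    exact hKimg_closed.preimage NormedSpace.Dual.toWeakDual_continuous
  -- weak*-closed convex hulls of subsets of K stay in K
  have hwK : ∀ S : Set (StrongDual ℝ X), S ⊆ K → wstarClConvHull S ⊆ K := by
    intro S hS
    have h1 : closure (convexHull ℝ (⇑StrongDual.toWeakDual '' S)) ⊆ ⇑StrongDual.toWeakDual '' K :=
      closure_minimal (convexHull_min ((Set.image_mono hS).trans subset_rfl) hKimg_conv)
        hKimg_closed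
    intro x hx
    have : StrongDual.toWeakDual x ∈ ⇑StrongDual.toWeakDual '' K := h1 hx
    obtain ⟨y, hy, hxy⟩ := this
    have : y = x := (StrongDual.toWeakDual : StrongDual ℝ X ≃ₗ[ℝ] WeakDual ℝ X).injective hxy
    exact this ▸ hy
  constructor
  · -- forward direction
    intro hI Bn hmono hB
    have hKeq := hI Bn hB
    have hUconv : Convex ℝ (⋃ n, wstarClConvHull (Bn n)) := by
      refine Directed.convex_iUnion ?_ fun n => wstarClConvHull_convex _
      intro m n
      rcases le_total m n with h | h
      · exact ⟨n, wstarClConvHull_mono (hmono h), subset_rfl⟩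
      · exact ⟨m, subset_rfl, wstarClConvHull_mono (hmono h)⟩
    rw [hUconv.convexHull_eq] at hKeq
    exact hKeq.subset
  · -- backward direction
    intro h Bn hB
    set C : ℕ → Set (StrongDual ℝ X) := Set.accumulate Bn with hC
    have hBC : B = ⋃ n, C n := hB.trans Set.iUnion_accumulate.symm
    have hK1 : K ⊆ closure (⋃ n, wstarClConvHull (C n)) :=
      h C Set.monotone_accumulate hBC
    have hBnK : ∀ n, Bn n ⊆ K := fun n =>
      (Set.subset_iUnion Bn n).trans (hB ▸ hBK)
    -- the compact convex sets in the weak dual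
    set A : ℕ → Set (WeakDual ℝ X) :=
      fun n => closure (convexHull ℝ (⇑StrongDual.toWeakDual '' Bn n)) with hA
    have hAsubK : ∀ n, A n ⊆ ⇑StrongDual.toWeakDual '' K := fun n =>
      closure_minimal (convexHull_min (Set.image_mono (hBnK n)) hKimg_conv) hKimg_closed
    have hAcomp : ∀ n, IsCompact (A n) := fun n =>
      IsCompact.of_isClosed_subset hKcomp isClosed_closure (hAsubK n)
    have hAconv : ∀ n, Convex ℝ (A n) := fun n => (convex_convexHull ℝ _).closure
    -- key claim: wstarClConvHull (C n) ⊆ convexHull of the union of the wstar hulls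
    have key : ∀ n, wstarClConvHull (C n) ⊆
        convexHull ℝ (⋃ m, wstarClConvHull (Bn m)) := by
      intro n
      -- image of C n
      have himgC : ⇑StrongDual.toWeakDual '' C n = ⋃ k ≤ n, ⇑StrongDual.toWeakDual '' Bn k := by
        rw [hC, Set.accumulate_def, Set.image_iUnion₂]
      have hsub1 : convexHull ℝ (⇑StrongDual.toWeakDual '' C n) ⊆
          convexHull ℝ (Set.accumulate A n) := by
        apply convexHull_mono
        rw [himgC, Set.accumulate_def]
        refine Set.iUnion₂_mono fun k _ => ?_
        exact (subset_convexHull ℝ _).trans subset_closure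
      have hcomp : IsCompact (convexHull ℝ (Set.accumulate A n)) :=
        isCompact_convexHull_accumulate_aux A hAcomp hAconv n
      have hsub2 : closure (convexHull ℝ (⇑StrongDual.toWeakDual '' C n)) ⊆
          convexHull ℝ (Set.accumulate A n) :=
        closure_minimal hsub1 hcomp.isClosed
      -- pull back
      intro x hx
      have hx' : StrongDual.toWeakDual x ∈ convexHull ℝ (Set.accumulate A n) := hsub2 hx
      have hx'' : x ∈ ⇑StrongDual.toWeakDual ⁻¹' (convexHull ℝ (Set.accumulate A n)) := hx'
      rw [preimage_toWeakDual_convexHull] at hx''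
      refine convexHull_mono ?_ hx''
      intro y hy
      rw [Set.accumulate_def, Set.preimage_iUnion₂] at hy
      obtain ⟨k, -, hk⟩ := Set.mem_iUnion₂.mp hy
      exact Set.mem_iUnion.mpr ⟨k, hk⟩
    refine Set.Subset.antisymm ?_ ?_
    · -- K ⊆ closure (convexHull ...)
      refine hK1.trans (closure_mono ?_)
      exact Set.iUnion_subset key
    · -- closure (convexHull ...) ⊆ K
      refine closure_minimal (convexHull_min (Set.iUnion_subset fun n => ?_) hKconv) hKclosed
      exact hwK _ (hBnK n)
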